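/- For integers 1 ≤ L < M < ∞ and real 0 ≤ ε ≤ 1 − L/M, the maximum of the conditional Shannon entropy H(X|Y) over all pairs (X, Y) with X valued in {1,...,M} and P_e^{(L)}(X|Y) ≤ ε equals h₂(ε) + (1−ε) log L + ε log(M−L), where h₂ is the binary entropy function. -/

import Mathlib

noncomputable section

def IsPmf {α : Type*} (p : α → ℝ) : Prop := (∀ x, 0 ≤ p x) ∧ ∑' x, p x = 1

def topSum (p : ℕ → ℝ) (k : ℕ) : ℝ :=
  sSup {t : ℝ | ∃ s : Finset ℕ, s.card = k ∧ t = ∑ x ∈ s, p x}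

/-- Shannon entropy (natural logarithm). -/
def shEnt (p : ℕ → ℝ) : ℝ := ∑' x, Real.negMulLog (p x)

/-- Binary entropy function. -/
def binEnt (u : ℝ) : ℝ := Real.negMulLog u + Real.negMulLog (1 - u)

lemma IsPmf.summable {α : Type*} {p : α → ℝ} (hp : IsPmf p) : Summable p := by
  by_contra h
  have := tsum_eq_zero_of_not_summable h
  rw [hp.2] at this; norm_num at this

lemma IsPmf.sum_le_one {α : Type*} {p : α → ℝ} (hp : IsPmf p) (s : Finset α) : ∑ x ∈ s, p x ≤ 1 := by
  rw [← hp.2]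
  exact Summable.sum_le_tsum s (fun i _ => hp.1 i) hp.summable

lemma IsPmf.le_one {α : Type*} {p : α → ℝ} (hp : IsPmf p) (x : α) : p x ≤ 1 := by
  simpa using hp.sum_le_one {x}

lemma topSum_bdd {p : ℕ → ℝ} (hp : IsPmf p) (k : ℕ) :
    BddAbove {t : ℝ | ∃ s : Finset ℕ, s.card = k ∧ t = ∑ x ∈ s, p x} := by
  refine ⟨1, ?_⟩
  rintro t ⟨s, -, rfl⟩
  exact hp.sum_le_one s

lemma le_topSum {p : ℕ → ℝ} (hp : IsPmf p) {k : ℕ} (s : Finset ℕ) (hs : s.card = k) :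
    ∑ x ∈ s, p x ≤ topSum p k :=
  le_csSup (topSum_bdd hp k) ⟨s, hs, rfl⟩

lemma topSum_le_one {p : ℕ → ℝ} (hp : IsPmf p) (k : ℕ) : topSum p k ≤ 1 := by
  refine csSup_le ⟨∑ x ∈ Finset.range k, p x, Finset.range k, by simp, rfl⟩ ?_
  rintro t ⟨s, -, rfl⟩
  exact hp.sum_le_one s

lemma exists_witness {p : ℕ → ℝ} (hp : IsPmf p) {L M : ℕ} (hLM : L ≤ M)
    (hsupp : ∀ x, p x ≠ 0 → x ∈ Finset.Icc 1 M) :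
    ∃ A : Finset ℕ, A ⊆ Finset.Icc 1 M ∧ A.card = L ∧ ∑ x ∈ A, p x = topSum p L := by
  have hcard : (Finset.Icc 1 M).card = M := by simp
  set F := (Finset.Icc 1 M).powerset.filter (fun s => s.card = L) with hF
  have hFne : F.Nonempty := by
    obtain ⟨t, ht, htc⟩ := Finset.exists_subset_card_eq (hcard ▸ hLM)
    exact ⟨t, by simp [hF, Finset.mem_powerset, ht, htc]⟩
  obtain ⟨A, hAF, hAmax⟩ := Finset.exists_max_image F (fun s => ∑ x ∈ s, p x) hFne
  simp only [hF, Finset.mem_filter, Finset.mem_powerset] at hAF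
  refine ⟨A, hAF.1, hAF.2, le_antisymm (le_topSum hp A hAF.2) ?_⟩
  refine csSup_le ⟨∑ x ∈ Finset.range L, p x, Finset.range L, by simp, rfl⟩ ?_
  rintro t ⟨s, hs, rfl⟩
  have h1 : ∑ x ∈ s, p x = ∑ x ∈ s ∩ Finset.Icc 1 M, p x := by
    refine (Finset.sum_subset Finset.inter_subset_left ?_).symm
    intro x hx hx'
    by_contra hne
    exact hx' (Finset.mem_inter.2 ⟨hx, hsupp x hne⟩)
  obtain ⟨B, hB1, hB2, hB3⟩ := Finset.exists_subsuperset_card_eq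
    (Finset.inter_subset_right (s₁ := s))
    (le_trans (Finset.card_le_card Finset.inter_subset_left) hs.le) (hcard ▸ hLM)
  have h2 : ∑ x ∈ s ∩ Finset.Icc 1 M, p x ≤ ∑ x ∈ B, p x :=
    Finset.sum_le_sum_of_subset_of_nonneg hB1 (fun i _ _ => hp.1 i)
  have h3 : ∑ x ∈ B, p x ≤ ∑ x ∈ A, p x := by
    refine hAmax B ?_
    simp [hF, Finset.mem_powerset, hB2, hB3]
  rw [h1]; exact h2.trans h3

lemma negMulLog_le_one {t : ℝ} (h0 : 0 ≤ t) : Real.negMulLog t ≤ 1 := by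
  rcases eq_or_lt_of_le h0 with h | h
  · simp [← h]
  · have := Real.log_le_sub_one_of_pos (inv_pos.2 h)
    rw [Real.log_inv] at this
    have ht : t * (-Real.log t) ≤ t * (t⁻¹ - 1) := by
      apply mul_le_mul_of_nonneg_left this h0
    have : t * (t⁻¹ - 1) = 1 - t := by field_simp
    calc Real.negMulLog t = t * (-Real.log t) := by rw [Real.negMulLog]; ring
      _ ≤ 1 - t := by rw [this] at ht; exact ht
      _ ≤ 1 := by linarith

lemma gibbs (s : Finset ℕ) (p r : ℕ → ℝ) (hp : ∀ x ∈ s, 0 ≤ p x)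
    (hr : ∀ x ∈ s, 0 ≤ r x) (hpr : ∀ x ∈ s, p x ≠ 0 → r x ≠ 0)
    (hps : ∑ x ∈ s, p x = 1) (hrs : ∑ x ∈ s, r x ≤ 1) :
    ∑ x ∈ s, Real.negMulLog (p x) ≤ ∑ x ∈ s, p x * (- Real.log (r x)) := by
  have key : ∀ x ∈ s, Real.negMulLog (p x) - p x * (- Real.log (r x)) ≤ r x - p x := by
    intro x hx
    rcases eq_or_lt_of_le (hp x hx) with h | h
    · simp [← h]; exact hr x hx
    · have hrx : 0 < r x := lt_of_le_of_ne (hr x hx) (Ne.symm (hpr x hx h.ne'))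
      have hlog : Real.log (r x / p x) ≤ r x / p x - 1 :=
        Real.log_le_sub_one_of_pos (div_pos hrx h)
      rw [Real.log_div hrx.ne' h.ne'] at hlog
      have := mul_le_mul_of_nonneg_left hlog (le_of_lt h)
      rw [mul_sub, mul_sub, mul_div_cancel₀ _ h.ne', mul_one] at this
      simp only [Real.negMulLog]
      nlinarith
  have := Finset.sum_le_sum key
  rw [Finset.sum_sub_distrib, Finset.sum_sub_distrib, hps] at this
  linarith

lemma shEnt_eq_sum {p : ℕ → ℝ} {M : ℕ} (hsupp : ∀ x, p x ≠ 0 → x ∈ Finset.Icc 1 M) :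
    shEnt p = ∑ x ∈ Finset.Icc 1 M, Real.negMulLog (p x) := by
  refine tsum_eq_sum ?_
  intro x hx
  have : p x = 0 := by by_contra h; exact hx (hsupp x h)
  simp [this]

lemma shEnt_nonneg {p : ℕ → ℝ} (hp : IsPmf p) {M : ℕ}
    (hsupp : ∀ x, p x ≠ 0 → x ∈ Finset.Icc 1 M) : 0 ≤ shEnt p := by
  rw [shEnt_eq_sum hsupp]
  exact Finset.sum_nonneg fun x _ => Real.negMulLog_nonneg (hp.1 x) (hp.le_one x)

lemma shEnt_le {p : ℕ → ℝ} (hp : IsPmf p) {M : ℕ}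
    (hsupp : ∀ x, p x ≠ 0 → x ∈ Finset.Icc 1 M) : shEnt p ≤ M := by
  rw [shEnt_eq_sum hsupp]
  calc ∑ x ∈ Finset.Icc 1 M, Real.negMulLog (p x) ≤ ∑ _x ∈ Finset.Icc 1 M, (1:ℝ) :=
        Finset.sum_le_sum fun x _ => negMulLog_le_one (hp.1 x)
    _ = M := by simp

lemma perY (L M : ℕ) (ε : ℝ) (hL : 1 ≤ L) (hLM : L < M)
    (hε0 : 0 ≤ ε) (hε1 : ε ≤ 1 - (L : ℝ) / M)
    {p : ℕ → ℝ} (hp : IsPmf p) (hsupp : ∀ x, p x ≠ 0 → x ∈ Finset.Icc 1 M)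
    (hε : ε ≠ 0 ∨ topSum p L = 1) :
    shEnt p ≤ (-Real.log ((1-ε)/L)) +
      ((-Real.log (ε/((M:ℝ)-L))) - (-Real.log ((1-ε)/L))) * (1 - topSum p L) := by
  have hLpos : (0:ℝ) < L := by exact_mod_cast hL
  have hMpos : (0:ℝ) < M := by
    have : 0 < M := lt_of_le_of_lt (Nat.zero_le L) hLM
    exact_mod_cast this
  have hMLpos : (0:ℝ) < (M:ℝ) - L := by
    have : (L:ℝ) < M := by exact_mod_cast hLM
    linarith
  have h1ε : 0 < 1 - ε := by
    have : (0:ℝ) < (L:ℝ)/M := by positivity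
    linarith
  have hpsum : ∑ x ∈ Finset.Icc 1 M, p x = 1 := by
    rw [← hp.2]
    refine (tsum_eq_sum ?_).symm
    intro x hx
    by_contra h; exact hx (hsupp x h)
  obtain ⟨A, hAsub, hAcard, hAsum⟩ := exists_witness hp hLM.le hsupp
  set c₁ := -Real.log ((1-ε)/L) with hc₁
  set c₂ := -Real.log (ε/((M:ℝ)-L)) with hc₂
  have hdiff : ∑ x ∈ Finset.Icc 1 M \ A, p x = 1 - topSum p L := by
    have := Finset.sum_sdiff hAsub (f := p)
    rw [hpsum, hAsum] at this
    linarith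
  rcases hε with hεne | htop
  · -- ε > 0 case
    have hεpos : 0 < ε := lt_of_le_of_ne hε0 (Ne.symm hεne)
    set r : ℕ → ℝ := fun x => if x ∈ A then (1-ε)/L else
      if x ∈ Finset.Icc 1 M then ε/((M:ℝ)-L) else 0 with hr
    have hrpos : ∀ x ∈ Finset.Icc 1 M, 0 < r x := by
      intro x hx
      simp only [hr]
      by_cases h1 : x ∈ A
      · rw [if_pos h1]; positivity
      · rw [if_neg h1, if_pos hx]; positivity
    have hrA : ∀ x ∈ A, r x = (1-ε)/L := by
      intro x hx; simp only [hr]; rw [if_pos hx]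
    have hrB : ∀ x ∈ Finset.Icc 1 M \ A, r x = ε/((M:ℝ)-L) := by
      intro x hx
      simp only [Finset.mem_sdiff] at hx
      simp only [hr]; rw [if_neg hx.2, if_pos hx.1]
    have hcard' : ((Finset.Icc 1 M \ A).card : ℝ) = (M:ℝ) - L := by
      rw [Finset.card_sdiff_of_subset hAsub, hAcard]
      have : (Finset.Icc 1 M).card = M := by simp
      rw [this, Nat.cast_sub hLM.le]
    have hrsum : ∑ x ∈ Finset.Icc 1 M, r x = 1 := by
      rw [← Finset.sum_sdiff hAsub, Finset.sum_congr rfl hrB, Finset.sum_congr rfl hrA,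
        Finset.sum_const, Finset.sum_const, nsmul_eq_mul, nsmul_eq_mul, hcard', hAcard]
      field_simp
      ring
    have hgibbs := gibbs (Finset.Icc 1 M) p r (fun x _ => hp.1 x)
      (fun x hx => (hrpos x hx).le) (fun x hx _ => (hrpos x hx).ne') hpsum hrsum.le
    have hrhs : ∑ x ∈ Finset.Icc 1 M, p x * (- Real.log (r x)) =
        (1 - topSum p L) * c₂ + (topSum p L) * c₁ := by
      rw [← Finset.sum_sdiff hAsub]
      have e1 : ∑ x ∈ Finset.Icc 1 M \ A, p x * (- Real.log (r x)) =
          (1 - topSum p L) * c₂ := by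
        rw [Finset.sum_congr rfl (fun x hx => by rw [hrB x hx]), ← Finset.sum_mul, hdiff]
      have e2 : ∑ x ∈ A, p x * (- Real.log (r x)) = (topSum p L) * c₁ := by
        rw [Finset.sum_congr rfl (fun x hx => by rw [hrA x hx]), ← Finset.sum_mul, hAsum]
      rw [e1, e2]
    rw [shEnt_eq_sum hsupp]
    calc ∑ x ∈ Finset.Icc 1 M, Real.negMulLog (p x)
        ≤ ∑ x ∈ Finset.Icc 1 M, p x * (- Real.log (r x)) := hgibbs
      _ = (1 - topSum p L) * c₂ + (topSum p L) * c₁ := hrhs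
      _ = c₁ + (c₂ - c₁) * (1 - topSum p L) := by ring
  · -- topSum = 1 case
    rw [htop]
    have hzero : ∀ x ∈ Finset.Icc 1 M \ A, p x = 0 := by
      have h0 : ∑ x ∈ Finset.Icc 1 M \ A, p x = 0 := by rw [hdiff, htop]; ring
      intro x hx
      exact (Finset.sum_eq_zero_iff_of_nonneg (fun i _ => hp.1 i)).1 h0 x hx
    have hsuppA : ∀ x, p x ≠ 0 → x ∈ A := by
      intro x hx
      have hIcc := hsupp x hx
      by_contra h
      exact hx (hzero x (Finset.mem_sdiff.2 ⟨hIcc, h⟩))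
    have hApsum : ∑ x ∈ A, p x = 1 := by rw [hAsum, htop]
    have hEnt : shEnt p = ∑ x ∈ A, Real.negMulLog (p x) := by
      refine tsum_eq_sum ?_
      intro x hx
      have : p x = 0 := by by_contra h; exact hx (hsuppA x h)
      simp [this]
    have hgibbs := gibbs A p (fun _ => (1:ℝ)/L) (fun x _ => hp.1 x)
      (fun x _ => by positivity) (fun x _ _ => by positivity) hApsum
      (by rw [Finset.sum_const, nsmul_eq_mul, hAcard]; field_simp; exact le_rfl)
    have hlogL : -Real.log ((1:ℝ)/L) = Real.log L := by
      rw [one_div, Real.log_inv]; ring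
    have hbound : shEnt p ≤ Real.log L := by
      rw [hEnt]
      calc ∑ x ∈ A, Real.negMulLog (p x)
          ≤ ∑ x ∈ A, p x * (- Real.log ((1:ℝ)/L)) := hgibbs
        _ = ∑ x ∈ A, p x * Real.log L := by rw [hlogL]
        _ = Real.log L := by rw [← Finset.sum_mul, hApsum, one_mul]
    have hc₁ge : Real.log L ≤ c₁ := by
      rw [hc₁, Real.log_div h1ε.ne' hLpos.ne']
      have := Real.log_nonpos (by linarith) (by linarith : 1 - ε ≤ 1)
      linarith
    calc shEnt p ≤ Real.log L := hbound
      _ ≤ c₁ := hc₁ge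
      _ = c₁ + (c₂ - c₁) * (1 - 1) := by ring

section Achieve

variable (L M : ℕ) (ε : ℝ)

def fanoP : ℕ → ℝ := fun x => if x ∈ Finset.Icc 1 L then (1-ε)/L else
  if x ∈ Finset.Icc (L+1) M then ε/((M:ℝ)-L) else 0

lemma fano_facts (hL : 1 ≤ L) (hLM : L < M) (hε0 : 0 ≤ ε) (hε1 : ε ≤ 1 - (L : ℝ) / M) :
    IsPmf (fanoP L M ε) ∧ (∀ x, fanoP L M ε x ≠ 0 → x ∈ Finset.Icc 1 M) ∧
    1 - topSum (fanoP L M ε) L ≤ ε ∧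
    shEnt (fanoP L M ε) = binEnt ε + (1 - ε) * Real.log L + ε * Real.log ((M:ℝ) - L) := by
  have hLpos : (0:ℝ) < L := by exact_mod_cast hL
  have hMpos : 0 < M := lt_of_le_of_lt (Nat.zero_le L) hLM
  have hMLpos : (0:ℝ) < (M:ℝ) - L := by
    have : (L:ℝ) < M := by exact_mod_cast hLM
    linarith
  have h1ε : 0 < 1 - ε := by
    have h2 : (L:ℝ)/M ≤ 1 - ε := by linarith
    have : (0:ℝ) < (L:ℝ)/M := by positivity
    linarith
  set p := fanoP L M ε with hpdef
  have hval1 : ∀ x ∈ Finset.Icc 1 L, p x = (1-ε)/L := by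
    intro x hx; simp only [hpdef, fanoP]; rw [if_pos hx]
  have hval2 : ∀ x ∈ Finset.Icc (L+1) M, p x = ε/((M:ℝ)-L) := by
    intro x hx
    have hx' : x ∉ Finset.Icc 1 L := by
      simp only [Finset.mem_Icc] at hx ⊢; omega
    simp only [hpdef, fanoP]; rw [if_neg hx', if_pos hx]
  have hnn : ∀ x, 0 ≤ p x := by
    intro x; simp only [hpdef, fanoP]
    split_ifs <;> positivity
  have hsupp : ∀ x, p x ≠ 0 → x ∈ Finset.Icc 1 M := by
    intro x hx
    simp only [hpdef, fanoP] at hx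
    by_cases h1 : x ∈ Finset.Icc 1 L
    · simp only [Finset.mem_Icc] at h1 ⊢; omega
    · rw [if_neg h1] at hx
      by_cases h2 : x ∈ Finset.Icc (L+1) M
      · simp only [Finset.mem_Icc] at h2 ⊢; omega
      · rw [if_neg h2] at hx; exact absurd rfl hx
  have hsplit : ∀ f : ℕ → ℝ, ∑ x ∈ Finset.Icc 1 M, f x =
      ∑ x ∈ Finset.Icc 1 L, f x + ∑ x ∈ Finset.Icc (L+1) M, f x := by
    intro f
    have h1 : Finset.Icc 1 M = Finset.Ioc 0 M := by
      ext x; simp [Finset.mem_Icc, Finset.mem_Ioc]; omega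
    have h2 : Finset.Icc 1 L = Finset.Ioc 0 L := by
      ext x; simp [Finset.mem_Icc, Finset.mem_Ioc]; omega
    have h3 : Finset.Icc (L+1) M = Finset.Ioc L M := by
      ext x; simp [Finset.mem_Icc, Finset.mem_Ioc]
    rw [h1, h2, h3, Finset.sum_Ioc_consecutive f (Nat.zero_le L) hLM.le]
  have hcard2 : ((Finset.Icc (L+1) M).card : ℝ) = (M:ℝ) - L := by
    rw [Nat.card_Icc]
    have : M + 1 - (L + 1) = M - L := by omega
    rw [this, Nat.cast_sub hLM.le]
  have hsum1 : ∑ x ∈ Finset.Icc 1 L, p x = 1 - ε := by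
    rw [Finset.sum_congr rfl hval1, Finset.sum_const, nsmul_eq_mul, Nat.card_Icc]
    simp only [Nat.add_sub_cancel]
    field_simp
  have hsum2 : ∑ x ∈ Finset.Icc (L+1) M, p x = ε := by
    rw [Finset.sum_congr rfl hval2, Finset.sum_const, nsmul_eq_mul, hcard2]
    field_simp
  have hpsum : ∑ x ∈ Finset.Icc 1 M, p x = 1 := by
    rw [hsplit, hsum1, hsum2]; ring
  have htsum : ∑' x, p x = 1 := by
    rw [tsum_eq_sum (s := Finset.Icc 1 M) (fun x hx => by
      by_contra h; exact hx (hsupp x h))]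
    exact hpsum
  have hpmf : IsPmf p := ⟨hnn, htsum⟩
  refine ⟨hpmf, hsupp, ?_, ?_⟩
  · have hle : ∑ x ∈ Finset.Icc 1 L, p x ≤ topSum p L :=
      le_topSum hpmf _ (by simp)
    rw [hsum1] at hle
    linarith
  · rw [shEnt_eq_sum hsupp, hsplit]
    have he1 : ∑ x ∈ Finset.Icc 1 L, Real.negMulLog (p x) =
        Real.negMulLog (1-ε) + (1-ε) * Real.log L := by
      rw [Finset.sum_congr rfl (fun x hx => by rw [hval1 x hx]), Finset.sum_const,
        nsmul_eq_mul, Nat.card_Icc]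
      simp only [Nat.add_sub_cancel]
      rw [Real.negMulLog, Real.negMulLog, Real.log_div h1ε.ne' hLpos.ne']
      field_simp
      ring
    have he2 : ∑ x ∈ Finset.Icc (L+1) M, Real.negMulLog (p x) =
        Real.negMulLog ε + ε * Real.log ((M:ℝ)-L) := by
      rw [Finset.sum_congr rfl (fun x hx => by rw [hval2 x hx]), Finset.sum_const,
        nsmul_eq_mul, hcard2]
      rcases eq_or_lt_of_le hε0 with h | h
      · rw [← h]; simp
      · rw [Real.negMulLog, Real.negMulLog, Real.log_div h.ne' hMLpos.ne']
        field_simp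
        ring
    rw [he1, he2, binEnt]
    ring

end Achieve


/-- Fano's inequality with list decoding for Shannon entropy: over all pairs
`(X,Y)` with `X` valued in `{1,…,M}` and `P_e^{(L)}(X|Y) ≤ ε`, the maximum of
`H(X|Y)` equals `h₂(ε) + (1−ε) log L + ε log(M−L)`. -/
theorem stmt_8 (L M : ℕ) (ε : ℝ) (hL : 1 ≤ L) (hLM : L < M)
    (hε0 : 0 ≤ ε) (hε1 : ε ≤ 1 - (L : ℝ) / M) :
    (∀ (β : Type) (q : β → ℝ) (W : β → ℕ → ℝ), IsPmf q → (∀ y, IsPmf (W y)) →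
      (∀ y x, W y x ≠ 0 → 1 ≤ x ∧ x ≤ M) →
      1 - ∑' y, q y * topSum (W y) L ≤ ε →
      ∑' y, q y * shEnt (W y) ≤
        binEnt ε + (1 - ε) * Real.log L + ε * Real.log ((M : ℝ) - L)) ∧
    (∃ (β : Type) (q : β → ℝ) (W : β → ℕ → ℝ), IsPmf q ∧ (∀ y, IsPmf (W y)) ∧
      (∀ y x, W y x ≠ 0 → 1 ≤ x ∧ x ≤ M) ∧
      1 - ∑' y, q y * topSum (W y) L ≤ ε ∧
      ∑' y, q y * shEnt (W y) =
        binEnt ε + (1 - ε) * Real.log L + ε * Real.log ((M : ℝ) - L)) := by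
  have hLpos : (0:ℝ) < L := by exact_mod_cast hL
  have hMpos : (0:ℝ) < M := by
    have : 0 < M := lt_of_le_of_lt (Nat.zero_le L) hLM
    exact_mod_cast this
  have hMLpos : (0:ℝ) < (M:ℝ) - L := by
    have : (L:ℝ) < M := by exact_mod_cast hLM
    linarith
  have h1ε : 0 < 1 - ε := by
    have h2 : (L:ℝ)/M ≤ 1 - ε := by linarith
    have : (0:ℝ) < (L:ℝ)/M := by positivity
    linarith
  constructor
  · intro β q W hq hW hsuppW herr
    have hsupp' : ∀ y, ∀ x, W y x ≠ 0 → x ∈ Finset.Icc 1 M := fun y x h =>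
      Finset.mem_Icc.2 (hsuppW y x h)
    set c₁ := -Real.log ((1-ε)/L) with hc₁
    set c₂ := -Real.log (ε/((M:ℝ)-L)) with hc₂
    set T : β → ℝ := fun y => topSum (W y) L with hTdef
    have hT0 : ∀ y, 0 ≤ T y := fun y =>
      le_trans (Finset.sum_nonneg fun x _ => (hW y).1 x)
        (le_topSum (hW y) (Finset.range L) (by simp))
    have hT1 : ∀ y, T y ≤ 1 := fun y => topSum_le_one (hW y) L
    have hq0 := hq.1
    have hqs : Summable q := hq.summable
    have hqT : Summable (fun y => q y * T y) := by
      refine Summable.of_nonneg_of_le (fun y => mul_nonneg (hq0 y) (hT0 y)) (fun y => ?_) hqs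
      calc q y * T y ≤ q y * 1 := mul_le_mul_of_nonneg_left (hT1 y) (hq0 y)
        _ = q y := mul_one _
    have hqe : Summable (fun y => q y * (1 - T y)) :=
      (hqs.sub hqT).congr (fun y => by ring)
    have hE : ∑' y, q y * (1 - T y) = 1 - ∑' y, q y * T y := by
      rw [show (fun y => q y * (1 - T y)) = fun y => q y - q y * T y from
        funext fun y => by ring, Summable.tsum_sub hqs hqT, hq.2]
    have hEε : ∑' y, q y * (1 - T y) ≤ ε := by rw [hE]; exact herr
    have henn : ∀ z, 0 ≤ q z * (1 - T z) := fun z =>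
      mul_nonneg (hq0 z) (by linarith [hT1 z])
    have hzero : ε = 0 → ∀ y, q y ≠ 0 → T y = 1 := by
      intro hε y hy
      have hle : q y * (1 - T y) ≤ ∑' z, q z * (1 - T z) :=
        Summable.le_tsum hqe y (fun z _ => henn z)
      have h0 : q y * (1 - T y) = 0 := by
        refine le_antisymm ?_ (henn y)
        rw [hε] at hEε
        linarith
      rcases mul_eq_zero.1 h0 with h | h
      · exact absurd h hy
      · linarith
    have key : ∀ y, q y * shEnt (W y) ≤ q y * (c₁ + (c₂ - c₁) * (1 - T y)) := by
      intro y
      by_cases hy : q y = 0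
      · simp [hy]
      · refine mul_le_mul_of_nonneg_left ?_ (hq0 y)
        refine perY L M ε hL hLM hε0 hε1 (hW y) (hsupp' y) ?_
        rcases eq_or_ne ε 0 with h | h
        · exact Or.inr (hzero h y hy)
        · exact Or.inl h
    have hlhs_summ : Summable (fun y => q y * shEnt (W y)) := by
      refine Summable.of_nonneg_of_le
        (fun y => mul_nonneg (hq0 y) (shEnt_nonneg (hW y) (hsupp' y)))
        (fun y => ?_) (hqs.mul_right (M:ℝ))
      exact mul_le_mul_of_nonneg_left (shEnt_le (hW y) (hsupp' y)) (hq0 y)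
    have hrhs_summ : Summable (fun y => q y * (c₁ + (c₂ - c₁) * (1 - T y))) :=
      (((hqs.mul_right c₁).add (hqe.mul_left (c₂ - c₁))).congr (fun y => by ring))
    have hstep : ∑' y, q y * shEnt (W y) ≤ c₁ + (c₂ - c₁) * ∑' y, q y * (1 - T y) := by
      calc ∑' y, q y * shEnt (W y)
          ≤ ∑' y, q y * (c₁ + (c₂ - c₁) * (1 - T y)) :=
            Summable.tsum_le_tsum key hlhs_summ hrhs_summ
        _ = ∑' y, (q y * c₁ + (c₂ - c₁) * (q y * (1 - T y))) :=
            tsum_congr (fun y => by ring)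
        _ = (∑' y, q y * c₁) + ∑' y, (c₂ - c₁) * (q y * (1 - T y)) :=
            Summable.tsum_add (hqs.mul_right c₁) (hqe.mul_left _)
        _ = c₁ + (c₂ - c₁) * ∑' y, q y * (1 - T y) := by
            rw [tsum_mul_right, hq.2, one_mul, tsum_mul_left]
    rcases eq_or_lt_of_le hε0 with hε | hε
    · -- ε = 0
      have hE0 : ∑' y, q y * (1 - T y) = 0 := by
        refine le_antisymm ?_ (tsum_nonneg henn)
        rw [← hε] at hEε
        exact hEε
      have hc₁L : c₁ = Real.log L := by
        rw [hc₁, ← hε]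
        simp
      rw [← hε]
      simp only [binEnt, Real.negMulLog_zero, sub_zero, Real.negMulLog_one, zero_mul,
        add_zero, zero_add, one_mul]
      rw [hE0, mul_zero, add_zero, hc₁L] at hstep
      exact hstep
    · -- ε > 0
      have hqMle : ε/((M:ℝ)-L) ≤ (1-ε)/L := by
        rw [div_le_div_iff₀ hMLpos hLpos]
        have hM := mul_le_mul_of_nonneg_right hε1 hMpos.le
        have : (1 - (L:ℝ)/M) * M = M - L := by field_simp
        rw [this] at hM
        nlinarith
      have hslope : 0 ≤ c₂ - c₁ := by
        rw [hc₁, hc₂]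
        have := Real.log_le_log (by positivity : (0:ℝ) < ε/((M:ℝ)-L)) hqMle
        linarith
      have hmul : (c₂ - c₁) * ∑' y, q y * (1 - T y) ≤ (c₂ - c₁) * ε :=
        mul_le_mul_of_nonneg_left hEε hslope
      have hfinal : c₁ + (c₂ - c₁) * ε =
          binEnt ε + (1 - ε) * Real.log L + ε * Real.log ((M:ℝ) - L) := by
        rw [hc₁, hc₂, Real.log_div h1ε.ne' hLpos.ne', Real.log_div hε.ne' hMLpos.ne',
          binEnt, Real.negMulLog, Real.negMulLog]
        ring
      linarith
  · refine ⟨Unit, fun _ => 1, fun _ => fanoP L M ε, ?_, ?_, ?_, ?_, ?_⟩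
    · refine ⟨fun _ => zero_le_one, ?_⟩
      rw [tsum_eq_single () (fun b hb => absurd (Subsingleton.elim b ()) hb)]
    · exact fun _ => (fano_facts L M ε hL hLM hε0 hε1).1
    · intro _ x hx
      have := (fano_facts L M ε hL hLM hε0 hε1).2.1 x hx
      exact Finset.mem_Icc.1 this
    · rw [tsum_eq_single () (fun b hb => absurd (Subsingleton.elim b ()) hb), one_mul]
      exact (fano_facts L M ε hL hLM hε0 hε1).2.2.1
    · rw [tsum_eq_single () (fun b hb => absurd (Subsingleton.elim b ()) hb), one_mul]
      exact (fano_facts L M ε hL hLM hε0 hε1).2.2.2
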